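/- Let R be a commutative ring, J ⊆ R an ideal, and f: M → N a surjective homomorphism of R-modules. Let (P_m)_{m∈ℕ} be a tower of R-modules with R-linear transition maps p_m: P_{m+1} → P_m, such that for every m one has J^m•P_m = 0 and P_m is projective as a module over R/J^m. Let i: ℕ → ℕ be a strictly increasing function and let g_m: P_{i(m)} → N/J^mN be R-linear maps satisfying π_m ∘ g_{m+1} = g_m ∘ (the composite transition map P_{i(m+1)} → P_{i(m)}) for all m, where π_m: N/J^{m+1}N → N/J^mN is the natural surjection. Then there exist R-linear maps h_m: P_{i(m)} → M/J^mM satisfying the analogous compatibility with transitions (π'_m ∘ h_{m+1} = h_m ∘ (transition P_{i(m+1)} → P_{i(m)}), with π'_m: M/J^{m+1}M → M/J^mM the natural surjection) and such that f̄_m ∘ h_m = g_m for all m, where f̄_m: M/J^mM → N/J^mN is the map induced by f. -/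

import Mathlib

variable {R : Type*} [CommRing R]

/-- The composite transition map `P b → P a` (for `a ≤ b`) of a tower of `R`-modules. -/
noncomputable def towerMap {P : ℕ → Type*} [∀ m, AddCommGroup (P m)] [∀ m, Module R (P m)]
    (p : ∀ m, P (m + 1) →ₗ[R] P m) : ∀ {a b : ℕ}, a ≤ b → (P b →ₗ[R] P a) :=
  fun {a _} h =>
    Nat.leRecOn h (fun {k} (g : P k →ₗ[R] P a) => g.comp (p k)) LinearMap.id

/-- The map `M/J^m M → N/J^m N` induced by an `R`-linear map `f : M → N`. -/
noncomputable def mapQPow (J : Ideal R) (m : ℕ)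
    {M N : Type*} [AddCommGroup M] [Module R M] [AddCommGroup N] [Module R N]
    (f : M →ₗ[R] N) :
    (M ⧸ (J ^ m • ⊤ : Submodule R M)) →ₗ[R] N ⧸ (J ^ m • ⊤ : Submodule R N) :=
  Submodule.mapQ _ _ f
    (Submodule.smul_le.2 fun r hr x _ => by
      simp only [Submodule.mem_comap, map_smul]
      exact Submodule.smul_mem_smul hr Submodule.mem_top)

/-- The natural surjection `M/J^{m+1} M → M/J^m M`. -/
noncomputable def transQPow (J : Ideal R) (m : ℕ)
    (M : Type*) [AddCommGroup M] [Module R M] :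
    (M ⧸ (J ^ (m + 1) • ⊤ : Submodule R M)) →ₗ[R] M ⧸ (J ^ m • ⊤ : Submodule R M) :=
  Submodule.mapQ _ _ LinearMap.id
    (by rw [Submodule.comap_id]
        exact Submodule.smul_mono_left (Ideal.pow_le_pow_right (Nat.le_succ m)))

lemma mapQPow_mk (J : Ideal R) (m : ℕ) {M N : Type*} [AddCommGroup M] [Module R M]
    [AddCommGroup N] [Module R N] (f : M →ₗ[R] N) (x : M) :
    mapQPow J m f (Submodule.Quotient.mk x) = Submodule.Quotient.mk (f x) := rfl

lemma transQPow_mk (J : Ideal R) (m : ℕ) (M : Type*) [AddCommGroup M] [Module R M] (x : M) :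
    transQPow J m M (Submodule.Quotient.mk x) = Submodule.Quotient.mk x := rfl

lemma mapQPow_comm (J : Ideal R) (m : ℕ) {M N : Type*} [AddCommGroup M] [Module R M]
    [AddCommGroup N] [Module R N] (f : M →ₗ[R] N) :
    (mapQPow J m f).comp (transQPow J m M) = (transQPow J m N).comp (mapQPow J (m+1) f) := by
  apply Submodule.linearMap_qext
  ext x
  rfl

lemma torsion_qpow (J : Ideal R) (m k : ℕ) (hk : m ≤ k)
    (M : Type*) [AddCommGroup M] [Module R M] :
    Module.IsTorsionBySet R (M ⧸ (J ^ m • ⊤ : Submodule R M)) ((J ^ k : Ideal R) : Set R) := by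
  rw [Module.isTorsionBySet_quotient_iff]
  intro x r hr
  exact Submodule.smul_mem_smul (Ideal.pow_le_pow_right hk hr) Submodule.mem_top

/-- Transport an `R`-linear map between modules torsion by `I` to an `R⧸I`-linear map,
and lifting property. -/
lemma lift_aux (I : Ideal R) {A B C : Type*} [AddCommGroup A] [Module R A]
    [AddCommGroup B] [Module R B] [AddCommGroup C] [Module R C]
    (hA : Module.IsTorsionBySet R A I) (hB : Module.IsTorsionBySet R B I)
    (hC : Module.IsTorsionBySet R C I)
    (hproj : letI := hC.module; Module.Projective (R ⧸ I) C)
    (π : A →ₗ[R] B) (hπ : Function.Surjective π) (g : C →ₗ[R] B) :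
    ∃ h : C →ₗ[R] A, π.comp h = g := by
  letI := hA.module
  letI := hB.module
  letI := hC.module
  let π' : A →ₗ[R ⧸ I] B :=
    { toFun := π, map_add' := π.map_add,
      map_smul' := fun c x => by
        obtain ⟨r, rfl⟩ := Ideal.Quotient.mk_surjective c
        show π ((Ideal.Quotient.mk I r) • x) = (Ideal.Quotient.mk I r) • π x
        rw [hA.mk_smul, hB.mk_smul]
        exact π.map_smul r x }
  let g' : C →ₗ[R ⧸ I] B :=
    { toFun := g, map_add' := g.map_add,
      map_smul' := fun c x => by
        obtain ⟨r, rfl⟩ := Ideal.Quotient.mk_surjective c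
        show g ((Ideal.Quotient.mk I r) • x) = (Ideal.Quotient.mk I r) • g x
        rw [hC.mk_smul, hB.mk_smul]
        exact g.map_smul r x }
  obtain ⟨h', hh'⟩ := Module.projective_lifting_property π' g' hπ
  refine ⟨{ toFun := h', map_add' := h'.map_add,
            map_smul' := fun r x => by
              have : h' ((Ideal.Quotient.mk I r) • x) = (Ideal.Quotient.mk I r) • h' x :=
                h'.map_smul _ x
              rwa [hC.mk_smul, hA.mk_smul] at this }, ?_⟩
  ext x
  exact LinearMap.congr_fun hh' x

lemma key_step (J : Ideal R) {M N : Type*} [AddCommGroup M] [Module R M]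
    [AddCommGroup N] [Module R N] (f : M →ₗ[R] N) (hf : Function.Surjective f)
    (m k : ℕ) (hk : m + 1 ≤ k)
    (C : Type*) [AddCommGroup C] [Module R C]
    (hCt : Module.IsTorsionBySet R C ((J ^ k : Ideal R) : Set R))
    (hCp : letI := hCt.module; Module.Projective (R ⧸ J ^ k) C)
    (u : C →ₗ[R] M ⧸ (J ^ m • ⊤ : Submodule R M))
    (v : C →ₗ[R] N ⧸ (J ^ (m + 1) • ⊤ : Submodule R N))
    (hcompat : (transQPow J m N).comp v = (mapQPow J m f).comp u) :
    ∃ h' : C →ₗ[R] M ⧸ (J ^ (m + 1) • ⊤ : Submodule R M),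
      (transQPow J m M).comp h' = u ∧ (mapQPow J (m + 1) f).comp h' = v := by
  classical
  set d : ((M ⧸ (J ^ m • ⊤ : Submodule R M)) × (N ⧸ (J ^ (m + 1) • ⊤ : Submodule R N)))
      →ₗ[R] N ⧸ (J ^ m • ⊤ : Submodule R N) :=
    (mapQPow J m f).comp (LinearMap.fst R _ _) - (transQPow J m N).comp (LinearMap.snd R _ _)
    with hd
  set Q : Submodule R _ := LinearMap.ker d with hQ
  -- the map M/J^{m+1} → Q
  have hmemα : ∀ x : M ⧸ (J ^ (m + 1) • ⊤ : Submodule R M),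
      ((transQPow J m M).prod (mapQPow J (m + 1) f)) x ∈ Q := by
    intro x
    rw [hQ, LinearMap.mem_ker, hd]
    simp only [LinearMap.sub_apply, LinearMap.comp_apply, LinearMap.fst_apply,
      LinearMap.snd_apply, LinearMap.prod_apply, Pi.prod]
    rw [sub_eq_zero]
    exact LinearMap.congr_fun (mapQPow_comm J m f) x
  let α : (M ⧸ (J ^ (m + 1) • ⊤ : Submodule R M)) →ₗ[R] Q :=
    LinearMap.codRestrict Q ((transQPow J m M).prod (mapQPow J (m + 1) f)) hmemα
  -- α is surjective
  have hαsurj : Function.Surjective α := by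
    rintro ⟨⟨x, y⟩, hxy⟩
    rw [hQ, LinearMap.mem_ker, hd] at hxy
    simp only [LinearMap.sub_apply, LinearMap.comp_apply, LinearMap.fst_apply,
      LinearMap.snd_apply] at hxy
    rw [sub_eq_zero] at hxy
    obtain ⟨a, rfl⟩ := Submodule.Quotient.mk_surjective _ x
    obtain ⟨b, rfl⟩ := Submodule.Quotient.mk_surjective _ y
    rw [mapQPow_mk, transQPow_mk] at hxy
    rw [Submodule.Quotient.eq] at hxy
    have : b - f a ∈ (J ^ m • ⊤ : Submodule R N) := by
      simpa using neg_mem hxy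
    have hmap : (J ^ m • ⊤ : Submodule R N) = Submodule.map f (J ^ m • ⊤ : Submodule R M) := by
      rw [Submodule.map_smul'', Submodule.map_top, LinearMap.range_eq_top.mpr hf]
    rw [hmap] at this
    obtain ⟨c, hc, hfc⟩ := this
    refine ⟨Submodule.Quotient.mk (a + c), ?_⟩
    apply Subtype.ext
    apply Prod.ext
    · show transQPow J m M (Submodule.Quotient.mk (a + c)) = Submodule.Quotient.mk a
      rw [transQPow_mk, Submodule.Quotient.eq]
      simpa using hc
    · show mapQPow J (m + 1) f (Submodule.Quotient.mk (a + c)) = Submodule.Quotient.mk b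
      rw [mapQPow_mk]
      congr 1
      rw [map_add, hfc]
      abel
  -- the map C → Q
  have hmemβ : ∀ x : C, (u.prod v) x ∈ Q := by
    intro x
    rw [hQ, LinearMap.mem_ker, hd]
    simp only [LinearMap.sub_apply, LinearMap.comp_apply, LinearMap.fst_apply,
      LinearMap.snd_apply, LinearMap.prod_apply, Pi.prod]
    rw [sub_eq_zero]
    exact (LinearMap.congr_fun hcompat x).symm
  let β : C →ₗ[R] Q := LinearMap.codRestrict Q (u.prod v) hmemβ
  -- torsion instances
  have hAt : Module.IsTorsionBySet R (M ⧸ (J ^ (m + 1) • ⊤ : Submodule R M))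
      ((J ^ k : Ideal R) : Set R) := torsion_qpow J (m + 1) k hk M
  have hBt : Module.IsTorsionBySet R Q ((J ^ k : Ideal R) : Set R) := by
    intro x r
    apply Subtype.ext
    have h1 : (r : R) • x.1.1 = 0 := torsion_qpow J m k (le_trans (Nat.le_succ m) hk) M (x := x.1.1) (a := r)
    have h2 : (r : R) • x.1.2 = 0 := torsion_qpow J (m + 1) k hk N (x := x.1.2) (a := r)
    exact Prod.ext h1 h2
  obtain ⟨h', hh'⟩ := lift_aux (J ^ k) hAt hBt hCt hCp α hαsurj β
  refine ⟨h', ?_, ?_⟩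
  · ext x
    have e := congrArg Subtype.val (LinearMap.congr_fun hh' x)
    exact congrArg Prod.fst e
  · ext x
    have e := congrArg Subtype.val (LinearMap.congr_fun hh' x)
    exact congrArg Prod.snd e

/-- **Lifting lemma for towers of levelwise projective modules.**
Let `J ⊆ R` be an ideal, `f : M → N` a surjection of `R`-modules, and `(P m)` a tower
of `R`-modules such that `J^m • P m = 0` and `P m` is projective over `R/J^m`.
Any morphism of pro-modules `{P m} → {N/J^m N}`, given by maps
`g m : P (i m) → N/J^m N` (for a strictly increasing reindexing `i`) compatible with the
transition maps, lifts to a compatible family `h m : P (i m) → M/J^m M` with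
`f̄ m ∘ h m = g m`. -/
theorem exists_lift_of_tower_projective (J : Ideal R)
    {M N : Type*} [AddCommGroup M] [Module R M] [AddCommGroup N] [Module R N]
    (f : M →ₗ[R] N) (hf : Function.Surjective f)
    (P : ℕ → Type*) [∀ m, AddCommGroup (P m)] [∀ m, Module R (P m)]
    (p : ∀ m, P (m + 1) →ₗ[R] P m)
    (htors : ∀ m, Module.IsTorsionBySet R (P m) ((J ^ m : Ideal R) : Set R))
    (hproj : ∀ m, letI := (htors m).module; Module.Projective (R ⧸ J ^ m) (P m))
    (i : ℕ → ℕ) (hi : StrictMono i)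
    (g : ∀ m, P (i m) →ₗ[R] N ⧸ (J ^ m • ⊤ : Submodule R N))
    (hg : ∀ m, (transQPow J m N).comp (g (m + 1))
      = (g m).comp (towerMap p (hi (Nat.lt_succ_self m)).le)) :
    ∃ h : ∀ m, P (i m) →ₗ[R] M ⧸ (J ^ m • ⊤ : Submodule R M),
      (∀ m, (transQPow J m M).comp (h (m + 1))
        = (h m).comp (towerMap p (hi (Nat.lt_succ_self m)).le)) ∧
      (∀ m, (mapQPow J m f).comp (h m) = g m) := by

  have step : ∀ m (hm : P (i m) →ₗ[R] M ⧸ (J ^ m • ⊤ : Submodule R M)),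
      (mapQPow J m f).comp hm = g m →
      ∃ hm' : P (i (m + 1)) →ₗ[R] M ⧸ (J ^ (m + 1) • ⊤ : Submodule R M),
        (transQPow J m M).comp hm' = hm.comp (towerMap p (hi (Nat.lt_succ_self m)).le) ∧
        (mapQPow J (m + 1) f).comp hm' = g (m + 1) := by
    intro m hm hc
    apply key_step J f hf m (i (m + 1)) hi.le_apply (P (i (m + 1))) (htors _) (hproj _)
    rw [hg m, ← hc]
    rfl
  choose next hnext1 hnext2 using step
  haveI : Subsingleton (N ⧸ (J ^ 0 • ⊤ : Submodule R N)) := by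
    rw [Submodule.Quotient.subsingleton_iff, pow_zero, Ideal.one_eq_top,
      Submodule.top_smul]
  have base : (mapQPow J 0 f).comp (0 : P (i 0) →ₗ[R] M ⧸ (J ^ 0 • ⊤ : Submodule R M)) = g 0 :=
    LinearMap.ext fun x => Subsingleton.elim _ _
  let H : ∀ m, {hm : P (i m) →ₗ[R] M ⧸ (J ^ m • ⊤ : Submodule R M) //
      (mapQPow J m f).comp hm = g m} :=
    fun m => Nat.rec ⟨0, base⟩ (fun k Hk => ⟨next k Hk.1 Hk.2, hnext2 k Hk.1 Hk.2⟩) m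
  exact ⟨fun m => (H m).1, fun m => hnext1 m (H m).1 (H m).2, fun m => (H m).2⟩
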